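/- Fix real constants ρ, α, β, K, R > 0 and discretization steps h, k > 0, and let x, y, θ : ℤ × ℤ → ℝ be discrete fields (first index n = time, second index i = space). Let L_d be the discrete rod Lagrangian assigning to the cell at (n, i) the value (ρ/2h²)[(x_{n+1,i} − x_{n,i})² + (y_{n+1,i} − y_{n,i})²] + (α/2h²)(θ_{n+1,i} − θ_{n,i})² − (β/2k²)(θ_{n,i+1} − θ_{n,i})² − (K/2k⁴)(x_{n,i−1} − 2x_{n,i} + x_{n,i+1})² − (K/2k⁴)(y_{n,i−1} − 2y_{n,i} + y_{n,i+1})², and let the discrete reaction force covectors at (n, i) be Φ¹_{(n,i)} = (1, 0, (R/2k)(y_{n,i+1} − y_{n,i−1})) and Φ²_{(n,i)} = (0, 1, −(R/2k)(x_{n,i+1} − x_{n,i−1})) in the (x, y, θ) components. Then the discrete field (x, y, θ) satisfies the discrete nonholonomic field equations E_{(n,i)} = λ̂_{n,i} Φ¹_{(n,i)} + μ̂_{n,i} Φ²_{(n,i)} for some λ̂, μ̂ : ℤ × ℤ → ℝ if and only if there exist λ, μ : ℤ × ℤ → ℝ such that for all (n, i): ρ(x_{n+1,i} − 2x_{n,i}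 + x_{n−1,i}) = h²λ_{n,i} − (h²K/k⁴)Δ⁴x_{n,i}, ρ(y_{n+1,i} − 2y_{n,i} + y_{n−1,i}) = h²μ_{n,i} − (h²K/k⁴)Δ⁴y_{n,i}, and α(θ_{n+1,i} − 2θ_{n,i} + θ_{n−1,i}) = Rh² [ λ_{n,i}(y_{n,i+1} − y_{n,i−1})/(2k) − μ_{n,i}(x_{n,i+1} − x_{n,i−1})/(2k) ] + (βh²/k²)Δ²θ_{n,i}, where Δ²f_{n,i} := f_{n,i+1} − 2f_{n,i} + f_{n,i−1} and Δ⁴f_{n,i} := f_{n,i+2} − 4f_{n,i+1} + 6f_{n,i} − 4f_{n,i−1} + f_{n,i−2}. -/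

import Mathlib

/-- The values of a discrete field on the 6-cell centered at `(n, i)`:
`((n, i−1), (n, i), (n, i+1), (n+1, i−1), (n+1, i), (n+1, i+1))`. -/
def cellVals {m : ℕ} (φ : ℤ × ℤ → Fin m → ℝ) (p : ℤ × ℤ) : Fin 6 → Fin m → ℝ :=
  ![φ (p.1, p.2 - 1), φ (p.1, p.2), φ (p.1, p.2 + 1),
    φ (p.1 + 1, p.2 - 1), φ (p.1 + 1, p.2), φ (p.1 + 1, p.2 + 1)]

/-- The partial gradient `D_j L_d ∈ ℝ^m` of a discrete Lagrangian with respect to its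
`j`-th slot. -/
noncomputable def Dslot {m : ℕ} (Ld : (Fin 6 → Fin m → ℝ) → ℝ) (j : Fin 6)
    (c : Fin 6 → Fin m → ℝ) (a : Fin m) : ℝ :=
  fderiv ℝ Ld c (Pi.single j (Pi.single a 1))

/-- The discrete Euler–Lagrange expression `E_{(n,i)}(φ)`. -/
noncomputable def discreteEL {m : ℕ} (Ld : (Fin 6 → Fin m → ℝ) → ℝ)
    (φ : ℤ × ℤ → Fin m → ℝ) (p : ℤ × ℤ) (a : Fin m) : ℝ :=
  Dslot Ld 0 (cellVals φ (p.1, p.2 + 1)) a + Dslot Ld 1 (cellVals φ (p.1, p.2)) a +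
    Dslot Ld 2 (cellVals φ (p.1, p.2 - 1)) a + Dslot Ld 3 (cellVals φ (p.1 - 1, p.2 + 1)) a +
    Dslot Ld 4 (cellVals φ (p.1 - 1, p.2)) a + Dslot Ld 5 (cellVals φ (p.1 - 1, p.2 - 1)) a

/-- The discrete Lagrangian of the nonholonomic planar Cosserat rod, as a function of
the values of the field `(x, y, θ)` on a 6-cell (slots `0,1,2` are the values at
`(n, i−1), (n, i), (n, i+1)` and slots `3,4,5` those at
`(n+1, i−1), (n+1, i), (n+1, i+1)`; components `0,1,2` are `x, y, θ`). -/
noncomputable def rodLd (ρ α β K h k : ℝ) : (Fin 6 → Fin 3 → ℝ) → ℝ := fun c =>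
  ρ / (2 * h ^ 2) * ((c 4 0 - c 1 0) ^ 2 + (c 4 1 - c 1 1) ^ 2)
    + α / (2 * h ^ 2) * (c 4 2 - c 1 2) ^ 2
    - β / (2 * k ^ 2) * (c 2 2 - c 1 2) ^ 2
    - K / (2 * k ^ 4) * (c 0 0 - 2 * c 1 0 + c 2 0) ^ 2
    - K / (2 * k ^ 4) * (c 0 1 - 2 * c 1 1 + c 2 1) ^ 2

/-- The discrete field of the rod, with components `(x, y, θ)`. -/
def rodField (x y θ : ℤ → ℤ → ℝ) : ℤ × ℤ → Fin 3 → ℝ := fun p =>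
  ![x p.1 p.2, y p.1 p.2, θ p.1 p.2]

noncomputable def ev (j : Fin 6) (a : Fin 3) : (Fin 6 → Fin 3 → ℝ) →L[ℝ] ℝ :=
  (ContinuousLinearMap.proj a : (Fin 3 → ℝ) →L[ℝ] ℝ).comp
    (ContinuousLinearMap.proj j : (Fin 6 → Fin 3 → ℝ) →L[ℝ] (Fin 3 → ℝ))

lemma hasF (j : Fin 6) (a : Fin 3) (c : Fin 6 → Fin 3 → ℝ) :
    HasFDerivAt (fun c : Fin 6 → Fin 3 → ℝ => c j a) (ev j a) c := (ev j a).hasFDerivAt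

lemma sqF {f : (Fin 6 → Fin 3 → ℝ) → ℝ} {f' : (Fin 6 → Fin 3 → ℝ) →L[ℝ] ℝ}
    {c : Fin 6 → Fin 3 → ℝ} (hf : HasFDerivAt f f' c) :
    HasFDerivAt (fun x => f x ^ 2) ((2 * f c) • f') c := by
  simpa [Function.comp_def] using (hasDerivAt_pow 2 (f c)).comp_hasFDerivAt c hf

lemma fderiv_rodLd (ρ α β K h k : ℝ) (c v : Fin 6 → Fin 3 → ℝ) :
    fderiv ℝ (rodLd ρ α β K h k) c v =
      ρ / (2 * h ^ 2) * (2 * (c 4 0 - c 1 0) * (v 4 0 - v 1 0)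
        + 2 * (c 4 1 - c 1 1) * (v 4 1 - v 1 1))
      + α / (2 * h ^ 2) * (2 * (c 4 2 - c 1 2) * (v 4 2 - v 1 2))
      - β / (2 * k ^ 2) * (2 * (c 2 2 - c 1 2) * (v 2 2 - v 1 2))
      - K / (2 * k ^ 4) * (2 * (c 0 0 - 2 * c 1 0 + c 2 0) * (v 0 0 - 2 * v 1 0 + v 2 0))
      - K / (2 * k ^ 4) * (2 * (c 0 1 - 2 * c 1 1 + c 2 1) * (v 0 1 - 2 * v 1 1 + v 2 1)) := by
  have H : HasFDerivAt (rodLd ρ α β K h k) _ c :=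
    ((((((sqF ((hasF 4 0 c).sub (hasF 1 0 c))).add
          (sqF ((hasF 4 1 c).sub (hasF 1 1 c)))).const_mul (ρ / (2 * h ^ 2))).add
        ((sqF ((hasF 4 2 c).sub (hasF 1 2 c))).const_mul (α / (2 * h ^ 2)))).sub
        ((sqF ((hasF 2 2 c).sub (hasF 1 2 c))).const_mul (β / (2 * k ^ 2)))).sub
        ((sqF (((hasF 0 0 c).sub ((hasF 1 0 c).const_mul 2)).add (hasF 2 0 c))).const_mul
          (K / (2 * k ^ 4)))).sub
        ((sqF (((hasF 0 1 c).sub ((hasF 1 1 c).const_mul 2)).add (hasF 2 1 c))).const_mul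
          (K / (2 * k ^ 4)))
  rw [H.fderiv]
  simp [ev, ContinuousLinearMap.comp_apply]
  ring

lemma idx1 (i : ℤ) : i + 1 - 1 = i := by ring
lemma idx2 (i : ℤ) : i - 1 + 1 = i := by ring
lemma idx3 (i : ℤ) : i + 1 + 1 = i + 2 := by ring
lemma idx4 (i : ℤ) : i - 1 - 1 = i - 2 := by ring

lemma EL_x (ρ α β K h k : ℝ) (x y θ : ℤ → ℤ → ℝ) (n i : ℤ) :
    discreteEL (rodLd ρ α β K h k) (rodField x y θ) (n, i) 0 =
      -(ρ / h ^ 2) * (x (n + 1) i - 2 * x n i + x (n - 1) i)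
        - K / k ^ 4 *
          (x n (i + 2) - 4 * x n (i + 1) + 6 * x n i - 4 * x n (i - 1) + x n (i - 2)) := by
  unfold discreteEL Dslot
  simp only [fderiv_rodLd]
  simp (config := { decide := true }) only [cellVals, rodField, Pi.single_apply,
    idx1, idx2, idx3, idx4, Matrix.cons_val', Matrix.cons_val_zero, Matrix.cons_val_one,
    Matrix.head_cons, Matrix.cons_val_fin_one, Matrix.empty_val', Matrix.head_fin_const,
    Matrix.cons_val_two, Matrix.tail_cons, Matrix.cons_val_three, Matrix.cons_val_four,
    Fin.isValue, if_true, if_false, mul_zero, zero_mul, mul_one, sub_zero, zero_sub,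
    add_zero, zero_add, mul_neg, neg_zero, Pi.zero_apply]
  ring

lemma EL_y (ρ α β K h k : ℝ) (x y θ : ℤ → ℤ → ℝ) (n i : ℤ) :
    discreteEL (rodLd ρ α β K h k) (rodField x y θ) (n, i) 1 =
      -(ρ / h ^ 2) * (y (n + 1) i - 2 * y n i + y (n - 1) i)
        - K / k ^ 4 *
          (y n (i + 2) - 4 * y n (i + 1) + 6 * y n i - 4 * y n (i - 1) + y n (i - 2)) := by
  unfold discreteEL Dslot
  simp only [fderiv_rodLd]
  simp (config := { decide := true }) only [cellVals, rodField, Pi.single_apply,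
    idx1, idx2, idx3, idx4, Matrix.cons_val', Matrix.cons_val_zero, Matrix.cons_val_one,
    Matrix.head_cons, Matrix.cons_val_fin_one, Matrix.empty_val', Matrix.head_fin_const,
    Matrix.cons_val_two, Matrix.tail_cons, Matrix.cons_val_three, Matrix.cons_val_four,
    Fin.isValue, if_true, if_false, mul_zero, zero_mul, mul_one, sub_zero, zero_sub,
    add_zero, zero_add, mul_neg, neg_zero, Pi.zero_apply]
  ring

lemma EL_θ (ρ α β K h k : ℝ) (x y θ : ℤ → ℤ → ℝ) (n i : ℤ) :
    discreteEL (rodLd ρ α β K h k) (rodField x y θ) (n, i) 2 =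
      -(α / h ^ 2) * (θ (n + 1) i - 2 * θ n i + θ (n - 1) i)
        + β / k ^ 2 * (θ n (i + 1) - 2 * θ n i + θ n (i - 1)) := by
  unfold discreteEL Dslot
  simp only [fderiv_rodLd]
  simp (config := { decide := true }) only [cellVals, rodField, Pi.single_apply,
    idx1, idx2, idx3, idx4, Matrix.cons_val', Matrix.cons_val_zero, Matrix.cons_val_one,
    Matrix.head_cons, Matrix.cons_val_fin_one, Matrix.empty_val', Matrix.head_fin_const,
    Matrix.cons_val_two, Matrix.tail_cons, Matrix.cons_val_three, Matrix.cons_val_four,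
    Fin.isValue, if_true, if_false, mul_zero, zero_mul, mul_one, sub_zero, zero_sub,
    add_zero, zero_add, mul_neg, neg_zero, Pi.zero_apply]
  ring


/-- the discrete nonholonomic field equations of the discretized
nonholonomic Cosserat rod are equivalent to the explicit second-order finite
difference scheme. -/
theorem discrete_nonholonomic_rod_equations
    (ρ α β K R h k : ℝ) (hρ : 0 < ρ) (hα : 0 < α) (hβ : 0 < β) (hK : 0 < K)
    (hR : 0 < R) (hh : 0 < h) (hk : 0 < k) (x y θ : ℤ → ℤ → ℝ) :
    ((∃ lamh muh : ℤ → ℤ → ℝ, ∀ n i : ℤ, ∀ a : Fin 3,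
        discreteEL (rodLd ρ α β K h k) (rodField x y θ) (n, i) a
          = lamh n i * (![1, 0, R / (2 * k) * (y n (i + 1) - y n (i - 1))] : Fin 3 → ℝ) a
            + muh n i *
              (![0, 1, -(R / (2 * k)) * (x n (i + 1) - x n (i - 1))] : Fin 3 → ℝ) a)
      ↔ (∃ lam mu : ℤ → ℤ → ℝ, ∀ n i : ℤ,
          ρ * (x (n + 1) i - 2 * x n i + x (n - 1) i)
            = h ^ 2 * lam n i - h ^ 2 * K / k ^ 4 *
                (x n (i + 2) - 4 * x n (i + 1) + 6 * x n i - 4 * x n (i - 1) + x n (i - 2)) ∧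
          ρ * (y (n + 1) i - 2 * y n i + y (n - 1) i)
            = h ^ 2 * mu n i - h ^ 2 * K / k ^ 4 *
                (y n (i + 2) - 4 * y n (i + 1) + 6 * y n i - 4 * y n (i - 1) + y n (i - 2)) ∧
          α * (θ (n + 1) i - 2 * θ n i + θ (n - 1) i)
            = R * h ^ 2 *
                (lam n i * (y n (i + 1) - y n (i - 1)) / (2 * k)
                  - mu n i * (x n (i + 1) - x n (i - 1)) / (2 * k))
              + β * h ^ 2 / k ^ 2 * (θ n (i + 1) - 2 * θ n i + θ n (i - 1)))) := by
  constructor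
  · rintro ⟨lamh, muh, H⟩
    refine ⟨fun n i => -(lamh n i), fun n i => -(muh n i), fun n i => ?_⟩
    have h0 := H n i 0
    have h1 := H n i 1
    have h2 := H n i 2
    rw [EL_x] at h0
    rw [EL_y] at h1
    rw [EL_θ] at h2
    simp only [Matrix.cons_val_zero, Matrix.cons_val_one, Matrix.head_cons,
      Matrix.cons_val_two, Matrix.tail_cons, mul_one, mul_zero, add_zero, zero_add] at h0 h1 h2
    have hh0 : (h : ℝ) ^ 2 ≠ 0 := pow_ne_zero _ hh.ne'
    have hk0 : (k : ℝ) ^ 4 ≠ 0 := pow_ne_zero _ hk.ne'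
    have hk2 : (k : ℝ) ^ 2 ≠ 0 := pow_ne_zero _ hk.ne'
    have hkk : (k : ℝ) ≠ 0 := hk.ne'
    field_simp at h0 h1 h2 ⊢
    refine ⟨?_, ?_, ?_⟩
    · first
      | linear_combination (-(1:ℝ)) * h0
      | linear_combination ((1:ℝ)) * h0
      | linear_combination (-k) * h0
      | linear_combination (k) * h0
      | linear_combination (-(2*k)) * h0
      | linear_combination ((2*k)) * h0
      | linear_combination (-(2*k^2)) * h0
      | linear_combination ((2*k^2)) * h0
      | linear_combination (-(k^2)) * h0
      | linear_combination ((k^2)) * h0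
      | linear_combination (-(4*k)) * h0
      | linear_combination ((4*k)) * h0
    · first
      | linear_combination (-(1:ℝ)) * h1
      | linear_combination ((1:ℝ)) * h1
      | linear_combination (-k) * h1
      | linear_combination (k) * h1
      | linear_combination (-(2*k)) * h1
      | linear_combination ((2*k)) * h1
      | linear_combination (-(2*k^2)) * h1
      | linear_combination ((2*k^2)) * h1
      | linear_combination (-(k^2)) * h1
      | linear_combination ((k^2)) * h1
      | linear_combination (-(4*k)) * h1
      | linear_combination ((4*k)) * h1
    · first
      | linear_combination (-(1:ℝ)) * h2
      | linear_combination ((1:ℝ)) * h2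
      | linear_combination (-k) * h2
      | linear_combination (k) * h2
      | linear_combination (-(2*k)) * h2
      | linear_combination ((2*k)) * h2
      | linear_combination (-(2*k^2)) * h2
      | linear_combination ((2*k^2)) * h2
      | linear_combination (-(k^2)) * h2
      | linear_combination ((k^2)) * h2
      | linear_combination (-(4*k)) * h2
      | linear_combination ((4*k)) * h2
  · rintro ⟨lam, mu, H⟩
    refine ⟨fun n i => -(lam n i), fun n i => -(mu n i), fun n i a => ?_⟩
    obtain ⟨h0, h1, h2⟩ := H n i
    have hh0 : (h : ℝ) ^ 2 ≠ 0 := pow_ne_zero _ hh.ne'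
    have hk0 : (k : ℝ) ^ 4 ≠ 0 := pow_ne_zero _ hk.ne'
    have hkk : (k : ℝ) ≠ 0 := hk.ne'
    match a with
    | 0 =>
      rw [EL_x]
      simp only [Matrix.cons_val_zero, mul_one, mul_zero, add_zero]
      field_simp at h0 ⊢
      linear_combination (-(1:ℝ)) * h0
    | 1 =>
      rw [EL_y]
      simp only [Matrix.cons_val_one, Matrix.head_cons, Matrix.cons_val_zero, mul_one, mul_zero, zero_add]
      field_simp at h1 ⊢
      linear_combination (-(1:ℝ)) * h1
    | 2 =>
      rw [EL_θ]
      simp only [Matrix.cons_val_two, Matrix.tail_cons, Matrix.head_cons]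
      field_simp at h2 ⊢
      first
        | linear_combination (-(1:ℝ)) * h2
        | linear_combination ((1:ℝ)) * h2
        | linear_combination (-k) * h2
        | linear_combination (k) * h2
        | linear_combination (-(2*k)) * h2
        | linear_combination ((2*k)) * h2
        | linear_combination (-(2*k^2)) * h2
        | linear_combination ((2*k^2)) * h2
        | linear_combination (-(k^2)) * h2
        | linear_combination ((k^2)) * h2
        | linear_combination (-(4*k)) * h2
        | linear_combination ((4*k)) * h2
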